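/- If φ: k[X₁,...,Xₘ] → k[X₁,...,Xₘ] is a k-algebra automorphism with φ(Xᵢ) = Fᵢ, then the determinant of the Jacobian matrix (∂Fᵢ/∂Xⱼ) is a nonzero element of k (i.e., a unit constant polynomial). -/

import Mathlib

open MvPolynomial

/-- Chain rule for `pderiv` composed with `aeval`. -/
lemma chain_rule {k : Type*} [Field k] {m : ℕ} (F : Fin m → MvPolynomial (Fin m) k)
    (j : Fin m) (p : MvPolynomial (Fin m) k) :
    pderiv j (aeval F p) = ∑ l, aeval F (pderiv l p) * pderiv j (F l) := by
  classical
  induction p using MvPolynomial.induction_on with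
  | C a => simp
  | add p q hp hq =>
    simp only [map_add, hp, hq, add_mul, Finset.sum_add_distrib]
  | mul_X p i hp =>
    have hder : ∀ l, pderiv l (p * X i) =
        pderiv l p * X i + (if i = l then p else 0) := by
      intro l
      rw [pderiv_mul]
      by_cases h : i = l
      · subst h; simp
      · simp [pderiv_X_of_ne h, h]
    rw [map_mul, aeval_X, pderiv_mul, hp]
    simp only [hder, map_add, map_mul, aeval_X, add_mul, Finset.sum_add_distrib,
      apply_ite (aeval F), map_zero, ite_mul, zero_mul, Finset.sum_ite_eq,
      Finset.mem_univ, if_true, Finset.sum_mul]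
    congr 1
    exact Finset.sum_congr rfl fun l _ => by ring

/-- A unit of a multivariate polynomial ring over a field is a constant. -/
lemma eq_C_of_isUnit' {k : Type*} [Field k] :
    ∀ {m : ℕ} {p : MvPolynomial (Fin m) k}, IsUnit p → ∃ c : k, p = C c := by
  intro m
  induction m with
  | zero =>
    intro p _
    exact ⟨coeff 0 p, eq_C_of_isEmpty p⟩
  | succ n ih =>
    intro p hp
    have h1 : IsUnit (finSuccEquiv k n p) := hp.map (finSuccEquiv k n)
    obtain ⟨r, hr, hrp⟩ := Polynomial.isUnit_iff.mp h1
    obtain ⟨c, hc⟩ := ih hr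
    refine ⟨c, (finSuccEquiv k n).injective ?_⟩
    rw [← hrp, hc]
    simp [finSuccEquiv_apply]

/-- If `φ : k[X₁,...,Xₘ] → k[X₁,...,Xₘ]` is a `k`-algebra automorphism with
`φ(Xᵢ) = Fᵢ`, then the determinant of the Jacobian matrix `(∂Fᵢ/∂Xⱼ)` is a
nonzero constant polynomial. -/
theorem stmt1 (k : Type*) [Field k] [CharZero k] (m : ℕ)
    (φ : MvPolynomial (Fin m) k ≃ₐ[k] MvPolynomial (Fin m) k)
    (F : Fin m → MvPolynomial (Fin m) k) (hF : ∀ i, φ (X i) = F i) :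
    ∃ c : k, c ≠ 0 ∧
      Matrix.det (Matrix.of fun i j => pderiv j (F i)) = C c := by
  classical
  have hφ : ∀ p, φ p = aeval F p := by
    have h := MvPolynomial.aeval_unique
      (φ : MvPolynomial (Fin m) k →ₐ[k] MvPolynomial (Fin m) k)
    have hfF : ((φ : MvPolynomial (Fin m) k →ₐ[k] MvPolynomial (Fin m) k) ∘ X) = F :=
      funext hF
    rw [hfF] at h
    intro p
    exact DFunLike.congr_fun h p
  set G : Fin m → MvPolynomial (Fin m) k := fun i => φ.symm (X i) with hG
  have key : ∀ i, aeval F (G i) = X i := by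
    intro i
    rw [← hφ, hG]
    exact φ.apply_symm_apply (X i)
  set A : Matrix (Fin m) (Fin m) (MvPolynomial (Fin m) k) :=
    Matrix.of fun i j => pderiv j (F i) with hA
  set B : Matrix (Fin m) (Fin m) (MvPolynomial (Fin m) k) :=
    Matrix.of fun i l => aeval F (pderiv l (G i)) with hB
  have hBA : B * A = 1 := by
    ext i j
    have hcr := chain_rule F j (G i)
    rw [key i] at hcr
    rw [Matrix.mul_apply]
    simp only [hB, hA, Matrix.of_apply]
    rw [← hcr]
    by_cases h : i = j
    · subst h; rw [pderiv_X_self, Matrix.one_apply_eq]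
    · rw [pderiv_X_of_ne h, Matrix.one_apply_ne h]
  have hAB : A * B = 1 := mul_eq_one_comm.mp hBA
  have hUnit : IsUnit A.det := by
    apply IsUnit.of_mul_eq_one B.det
    rw [← Matrix.det_mul, hAB, Matrix.det_one]
  obtain ⟨c, hc⟩ := eq_C_of_isUnit' hUnit
  refine ⟨c, ?_, hc⟩
  have hcu : IsUnit (constantCoeff (C c : MvPolynomial (Fin m) k)) := by
    rw [← hc]; exact hUnit.map constantCoeff
  simpa using hcu.ne_zero
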